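/- (Rayleigh mixture of Hüsler–Reiss distributions.) For every σ > 0 and all x, y ∈ ℝ, with η = √(1 + 1/σ²), ∫_0^∞ [Φ(λ + (y−x)/(2λ)) e^{−x} + Φ(λ + (x−y)/(2λ)) e^{−y}] · (λ/σ²) e^{−λ²/(2σ²)} dλ = e^{−min(x,y)} + (1/η) · e^{−(x+y)/2} · e^{−|y−x|·η/2}. -/

import Mathlib

open MeasureTheory Filter Real Set Topology

/-- Standard normal density. -/
noncomputable def stdPdf (t : ℝ) : ℝ := (Real.sqrt (2 * Real.pi))⁻¹ * Real.exp (-(t ^ 2) / 2)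

/-- Standard normal CDF. -/
noncomputable def stdCdf (x : ℝ) : ℝ := ∫ t in Set.Iic x, stdPdf t

lemma stdPdf_cont : Continuous stdPdf := by
  unfold stdPdf; fun_prop

lemma stdPdf_nonneg (t : ℝ) : 0 ≤ stdPdf t := by
  unfold stdPdf; positivity

lemma stdPdf_le (t : ℝ) : stdPdf t ≤ (Real.sqrt (2 * Real.pi))⁻¹ := by
  unfold stdPdf
  have h1 : Real.exp (-(t ^ 2) / 2) ≤ 1 := by
    rw [Real.exp_le_one_iff]; nlinarith [sq_nonneg t]
  have h2 : (0:ℝ) ≤ (Real.sqrt (2 * Real.pi))⁻¹ := by positivity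
  nlinarith

lemma stdPdf_eq (t : ℝ) : stdPdf t = (Real.sqrt (2 * Real.pi))⁻¹ * Real.exp (-(1/2) * t ^ 2) := by
  unfold stdPdf; ring_nf

lemma stdPdf_int : Integrable stdPdf := by
  have := (integrable_exp_neg_mul_sq (by norm_num : (0:ℝ) < 1/2)).const_mul
    (Real.sqrt (2 * Real.pi))⁻¹
  exact this.congr (by filter_upwards with t; rw [stdPdf_eq])

lemma stdPdf_integral : ∫ t, stdPdf t = 1 := by
  have h : ∫ t, stdPdf t = (Real.sqrt (2 * Real.pi))⁻¹ * ∫ t : ℝ, Real.exp (-(1/2) * t ^ 2) := by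
    rw [← integral_const_mul]; congr 1; ext t; rw [stdPdf_eq]
  rw [h, integral_gaussian]
  have : Real.pi / (1/2) = 2 * Real.pi := by ring
  rw [this, inv_mul_cancel₀]
  positivity

lemma stdCdf_hasDerivAt (x : ℝ) : HasDerivAt stdCdf (stdPdf x) x := by
  have heq : stdCdf = fun z => stdCdf 0 + ∫ t in (0:ℝ)..z, stdPdf t := by
    funext z
    rw [← intervalIntegral.integral_Iic_sub_Iic stdPdf_int.integrableOn stdPdf_int.integrableOn]
    unfold stdCdf; ring
  rw [heq]
  exact (intervalIntegral.integral_hasDerivAt_right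
    (stdPdf_cont.intervalIntegrable _ _)
    stdPdf_cont.stronglyMeasurable.stronglyMeasurableAtFilter
    stdPdf_cont.continuousAt).const_add _

lemma stdCdf_cont : Continuous stdCdf :=
  continuous_iff_continuousAt.2 fun x => (stdCdf_hasDerivAt x).continuousAt

lemma stdCdf_nonneg (x : ℝ) : 0 ≤ stdCdf x :=
  setIntegral_nonneg measurableSet_Iic fun t _ => stdPdf_nonneg t

lemma stdCdf_le_one (x : ℝ) : stdCdf x ≤ 1 := by
  rw [← stdPdf_integral]
  exact setIntegral_le_integral stdPdf_int (Eventually.of_forall stdPdf_nonneg)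

lemma stdCdf_tendsto_atTop : Tendsto stdCdf atTop (𝓝 1) := by
  rw [← stdPdf_integral]
  exact (aecover_Iic tendsto_id).integral_tendsto_of_countably_generated stdPdf_int

lemma stdCdf_add_Ioi (x : ℝ) : stdCdf x + ∫ t in Ioi x, stdPdf t = 1 := by
  unfold stdCdf
  rw [← stdPdf_integral, ← setIntegral_union (Iic_disjoint_Ioi le_rfl) measurableSet_Ioi
    stdPdf_int.integrableOn stdPdf_int.integrableOn, Iic_union_Ioi, setIntegral_univ]

lemma stdCdf_tendsto_atBot : Tendsto stdCdf atBot (𝓝 0) := by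
  have h1 : Tendsto (fun x => ∫ t in Ioi x, stdPdf t) atBot (𝓝 1) := by
    rw [← stdPdf_integral]
    exact (aecover_Ioi tendsto_id).integral_tendsto_of_countably_generated stdPdf_int
  have h2 : Tendsto (fun x => 1 - ∫ t in Ioi x, stdPdf t) atBot (𝓝 (1 - 1)) :=
    tendsto_const_nhds.sub h1
  simp only [sub_self] at h2
  refine h2.congr fun x => ?_
  have := stdCdf_add_Ioi x; linarith

lemma stdCdf_zero : stdCdf 0 = 1/2 := by
  have h1 : (∫ t in Ioi (0:ℝ), stdPdf t) = stdCdf 0 := by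
    have h := integral_comp_neg_Ioi (0:ℝ) stdPdf
    simp only [neg_zero] at h
    unfold stdCdf
    rw [← h]
    refine setIntegral_congr_fun measurableSet_Ioi fun t _ => ?_
    simp [stdPdf]
  have := stdCdf_add_Ioi 0
  rw [h1] at this; linarith

lemma glasser_image {p a : ℝ} (hp : 0 < p) (ha : 0 < a) :
    (fun l : ℝ => p * l - a / l) '' Ioi 0 = univ := by
  apply eq_univ_of_forall
  intro u
  set s := Real.sqrt (u^2 + 4*p*a) with hs_def
  have hs2 : s ^ 2 = u^2 + 4*p*a := Real.sq_sqrt (by positivity)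
  have hs_abs : |u| < s := by
    rw [← Real.sqrt_sq_eq_abs, hs_def]
    exact Real.sqrt_lt_sqrt (sq_nonneg u) (by nlinarith)
  have hsu : -u < s := by cases abs_lt.1 hs_abs; linarith
  set l := (u + s) / (2*p) with hl_def
  have hl : 0 < l := by
    apply div_pos; linarith; linarith
  refine ⟨l, hl, ?_⟩
  have hlne : l ≠ 0 := hl.ne'
  have key : p * l ^ 2 - u * l - a = 0 := by
    rw [hl_def]
    field_simp
    nlinarith [hs2]
  show p * l - a / l = u
  field_simp
  nlinarith [key]

lemma glasser_inj {p a : ℝ} (hp : 0 < p) (ha : 0 < a) :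
    InjOn (fun l : ℝ => p * l - a / l) (Ioi 0) := by
  intro u hu v hv h
  simp only at h
  have hu' : (0:ℝ) < u := hu
  have hv' : (0:ℝ) < v := hv
  have h2 : (u - v) * (p * u * v + a) = 0 := by
    have h' : (p * u - a / u) * (u * v) = (p * v - a / v) * (u * v) := by rw [h]
    field_simp at h'
    have h2' : (u * v) * ((u - v) * (p * u * v + a)) = 0 := by linear_combination (u * v) * h'
    rcases mul_eq_zero.1 h2' with h3 | h3
    · nlinarith
    · exact h3
  have hpos : 0 < p * u * v + a := by positivity
  have := mul_eq_zero.1 h2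
  rcases this with h3 | h3
  · linarith
  · linarith

lemma inv_image_Ioi {c : ℝ} (hc : 0 < c) : (fun l : ℝ => c / l) '' Ioi 0 = Ioi 0 := by
  ext u
  constructor
  · rintro ⟨l, hl, rfl⟩
    exact div_pos hc hl
  · intro hu
    exact ⟨c / u, div_pos hc hu, by field_simp⟩

lemma inv_inj_Ioi {c : ℝ} (hc : 0 < c) : InjOn (fun l : ℝ => c / l) (Ioi 0) := by
  intro u hu v hv h
  simp only at h
  have hu' : (0:ℝ) < u := hu
  have hv' : (0:ℝ) < v := hv
  field_simp at h
  linarith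

lemma f_deriv {p a : ℝ} : ∀ l ∈ Ioi (0:ℝ),
    HasDerivWithinAt (fun l : ℝ => p * l - a / l) (p + a / l ^ 2) (Ioi 0) l := by
  intro l hl
  have hl' : (0:ℝ) < l := hl
  have h1 : HasDerivAt (fun l : ℝ => p * l - a / l) (p + a / l ^ 2) l := by
    have h2 : HasDerivAt (fun l : ℝ => a / l) (-(a / l ^ 2)) l := by
      simpa [div_eq_mul_inv, mul_comm, neg_div] using
        (hasDerivAt_inv hl'.ne').const_mul a
    exact (((hasDerivAt_id l).const_mul p).sub h2).congr_deriv (by ring)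
  exact h1.hasDerivWithinAt

lemma phi_deriv {c : ℝ} : ∀ l ∈ Ioi (0:ℝ),
    HasDerivWithinAt (fun l : ℝ => c / l) (-(c / l ^ 2)) (Ioi 0) l := by
  intro l hl
  have hl' : (0:ℝ) < l := hl
  have h2 : HasDerivAt (fun l : ℝ => c / l) (-(c / l ^ 2)) l := by
    simpa [div_eq_mul_inv, mul_comm, neg_div] using (hasDerivAt_inv hl'.ne').const_mul c
  exact h2.hasDerivWithinAt

lemma gauss_total : ∫ u : ℝ, Real.exp (-u^2/2) = Real.sqrt (2*Real.pi) := by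
  have h := integral_gaussian (1/2)
  rw [show Real.pi / (1/2) = 2*Real.pi by ring] at h
  rw [← h]
  congr 1; funext u; congr 1; ring

lemma Gf_meas {p a : ℝ} : Measurable (fun l : ℝ => Real.exp (-(p*l - a/l)^2/2)) := by
  have m1 : Measurable fun l : ℝ => p * l - a / l :=
    (measurable_id.const_mul p).sub (measurable_const.div measurable_id)
  exact Real.measurable_exp.comp ((m1.pow_const 2).neg.div_const 2)

lemma Gf_integrable {p a : ℝ} (hp : 0 < p) :
    IntegrableOn (fun l : ℝ => Real.exp (-(p*l - a/l)^2/2)) (Ioi 0) := by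
  apply Integrable.mono' (g := fun l => Real.exp (p*a) * Real.exp (-(p^2/2)*l^2))
  · exact ((integrable_exp_neg_mul_sq (by positivity : (0:ℝ) < p^2/2)).const_mul
      (Real.exp (p*a))).restrict
  · exact Gf_meas.aestronglyMeasurable.restrict
  · rw [ae_restrict_iff' measurableSet_Ioi]
    filter_upwards with l hl
    have hl' : (0:ℝ) < l := hl
    have he : (a / l) * l = a := div_mul_cancel₀ a hl'.ne'
    rw [Real.norm_eq_abs, abs_of_pos (Real.exp_pos _), ← Real.exp_add, Real.exp_le_exp]
    nlinarith [sq_nonneg (a/l), sq_nonneg (p*l - a/l)]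

lemma glasser_pos {p a : ℝ} (hp : 0 < p) (ha : 0 < a) :
    ∫ l in Ioi (0:ℝ), Real.exp (-(p*l - a/l)^2/2) = Real.sqrt (2*Real.pi) / (2*p) := by
  set G : ℝ → ℝ := fun u => Real.exp (-u^2/2) with hG
  set Gf : ℝ → ℝ := fun l => Real.exp (-(p*l - a/l)^2/2) with hGf
  have hc : 0 < a / p := div_pos ha hp
  -- first change of variables
  have step1 := integral_image_eq_integral_abs_deriv_smul measurableSet_Ioi
    (f_deriv (p := p) (a := a)) (glasser_inj hp ha) G
  rw [glasser_image hp ha, Measure.restrict_univ] at step1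
  rw [gauss_total] at step1
  -- second change of variables
  have hphi_img := inv_image_Ioi hc
  have step2 := integral_image_eq_integral_abs_deriv_smul measurableSet_Ioi
    (phi_deriv (c := a/p)) (inv_inj_Ioi hc) Gf
  rw [hphi_img] at step2
  have step2' : ∫ l in Ioi (0:ℝ), Gf l = ∫ l in Ioi (0:ℝ), a / (p * l^2) * Gf l := by
    rw [step2]
    refine setIntegral_congr_fun measurableSet_Ioi fun l hl => ?_
    have hl' : (0:ℝ) < l := hl
    have h1 : |(-(a / p / l ^ 2))| = a / (p * l^2) := by
      rw [abs_neg, abs_of_pos (by positivity)]; ring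
    have h2 : Gf (a / p / l) = Gf l := by
      simp only [hGf]
      congr 1
      have : p * (a / p / l) - a / (a / p / l) = -(p * l - a / l) := by field_simp; ring
      rw [this]; ring
    rw [smul_eq_mul, h1, h2]
  -- integrability of the second piece
  have Int2 : IntegrableOn (fun l : ℝ => a / (p * l^2) * Gf l) (Ioi 0) := by
    have hiff := integrableOn_image_iff_integrableOn_abs_deriv_smul measurableSet_Ioi
      (phi_deriv (c := a/p)) (inv_inj_Ioi hc) Gf
    rw [hphi_img] at hiff
    have := hiff.1 (Gf_integrable hp)
    apply this.congr_fun _ measurableSet_Ioi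
    intro l hl
    have hl' : (0:ℝ) < l := hl
    have h1 : |(-(a / p / l ^ 2))| = a / (p * l^2) := by
      rw [abs_neg, abs_of_pos (by positivity)]; ring
    have h2 : Gf (a / p / l) = Gf l := by
      simp only [hGf]
      congr 1
      have : p * (a / p / l) - a / (a / p / l) = -(p * l - a / l) := by field_simp; ring
      rw [this]; ring
    dsimp only
    rw [smul_eq_mul, h1, h2]
  -- split
  have split : ∫ l in Ioi (0:ℝ), |p + a / l ^ 2| • G (p * l - a / l)
      = (∫ l in Ioi (0:ℝ), p * Gf l) + ∫ l in Ioi (0:ℝ), p * (a / (p * l^2) * Gf l) := by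
    rw [← integral_add (((Gf_integrable hp).const_mul p)) (Int2.const_mul p)]
    refine setIntegral_congr_fun measurableSet_Ioi fun l hl => ?_
    have hl' : (0:ℝ) < l := hl
    rw [smul_eq_mul, abs_of_pos (by positivity)]
    have hthis : Gf l = G (p * l - a / l) := rfl
    rw [← hthis]
    have hpp : p * (a / (p * l ^ 2)) = a / l ^ 2 := by field_simp
    rw [← mul_assoc, hpp]
    ring
  rw [split] at step1
  rw [integral_const_mul, integral_const_mul, ← step2'] at step1
  have hGfI : ∫ l in Ioi (0:ℝ), Gf l = Real.sqrt (2*Real.pi) / (2*p) := by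
    have h2p : (2*p) ≠ 0 := by positivity
    field_simp at step1 ⊢
    linarith [step1]
  exact hGfI

lemma glasser {p a : ℝ} (hp : 0 < p) (ha : 0 ≤ a) :
    ∫ l in Ioi (0:ℝ), Real.exp (-(p^2*l^2 + a^2/l^2)/2)
      = Real.sqrt (2*Real.pi) / (2*p) * Real.exp (-(p*a)) := by
  rcases ha.eq_or_lt with rfl | ha'
  · simp only [ne_eq, OfNat.ofNat_ne_zero, not_false_eq_true, zero_pow, zero_div, add_zero,
      mul_zero, neg_zero, Real.exp_zero, mul_one]
    have h := integral_gaussian_Ioi (p^2/2)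
    have heq : ∀ l : ℝ, -(p^2/2) * l^2 = -(p^2*l^2)/2 := fun l => by ring
    simp_rw [heq] at h
    rw [h]
    rw [show Real.pi / (p^2/2) = 2*Real.pi / p^2 by ring]
    rw [Real.sqrt_div (by positivity : (0:ℝ) ≤ 2*Real.pi), Real.sqrt_sq hp.le]
    ring
  · have hpt : ∀ l ∈ Ioi (0:ℝ),
        Real.exp (-(p^2*l^2 + a^2/l^2)/2) = Real.exp (-(p*a)) * Real.exp (-(p*l - a/l)^2/2) := by
      intro l hl
      have hl' : (0:ℝ) < l := hl
      rw [← Real.exp_add, Real.exp_eq_exp]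
      have he : (a / l) * l = a := div_mul_cancel₀ a hl'.ne'
      have : (a/l)^2 = a^2/l^2 := by rw [div_pow]
      nlinarith [he, this]
    rw [setIntegral_congr_fun measurableSet_Ioi hpt, integral_const_mul, glasser_pos hp ha']
    ring

lemma hasDerivAt_cdiv {c l : ℝ} (hl : l ≠ 0) :
    HasDerivAt (fun l : ℝ => c / l) (-(c / l ^ 2)) l := by
  simpa [div_eq_mul_inv, mul_comm, neg_div] using (hasDerivAt_inv hl).const_mul c

lemma hasDerivAt_E {σ l : ℝ} (hσ : 0 < σ) :
    HasDerivAt (fun l : ℝ => Real.exp (-l^2/(2*σ^2))) (-(l/σ^2) * Real.exp (-l^2/(2*σ^2))) l := by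
  have hin : HasDerivAt (fun l : ℝ => -l^2/(2*σ^2)) (-(l/σ^2)) l := by
    have h1 : HasDerivAt (fun l : ℝ => l^2) (2*l) l := by
      simpa using hasDerivAt_pow 2 l
    have := (h1.neg).div_const (2*σ^2)
    refine this.congr_deriv ?_
    rw [neg_div, mul_div_mul_left _ _ (two_ne_zero' ℝ)]
  simpa [mul_comm] using hin.exp

lemma pdf_shift {a l : ℝ} (hl : l ≠ 0) :
    Real.exp (-(2*a)) * stdPdf (l - a/l) = stdPdf (l + a/l) := by
  unfold stdPdf
  rw [mul_left_comm, ← Real.exp_add]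
  congr 2
  have he : (a / l) * l = a := div_mul_cancel₀ a hl
  nlinarith [he]

lemma hasDerivAt_H {σ a l : ℝ} (hσ : 0 < σ) (hl : 0 < l) :
    HasDerivAt
      (fun l : ℝ => -((stdCdf (l + a/l) + Real.exp (-(2*a)) * stdCdf (l - a/l))
        * Real.exp (-l^2/(2*σ^2))))
      ((stdCdf (l + a/l) + Real.exp (-(2*a)) * stdCdf (l - a/l))
          * (l/σ^2 * Real.exp (-l^2/(2*σ^2)))
        - 2 * stdPdf (l + a/l) * Real.exp (-l^2/(2*σ^2))) l := by
  have d1 : HasDerivAt (fun l : ℝ => l + a/l) (1 + -(a/l^2)) l :=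
    (hasDerivAt_id l).add (hasDerivAt_cdiv hl.ne')
  have d2 : HasDerivAt (fun l : ℝ => l - a/l) (1 - -(a/l^2)) l :=
    (hasDerivAt_id l).sub (hasDerivAt_cdiv hl.ne')
  have c1 : HasDerivAt (fun l : ℝ => stdCdf (l + a/l))
      (stdPdf (l + a/l) * (1 + -(a/l^2))) l := by
    exact (stdCdf_hasDerivAt (l + a/l)).comp l d1
  have c2 : HasDerivAt (fun l : ℝ => stdCdf (l - a/l))
      (stdPdf (l - a/l) * (1 - -(a/l^2))) l := by
    exact (stdCdf_hasDerivAt (l - a/l)).comp l d2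
  have cg : HasDerivAt
      (fun l : ℝ => stdCdf (l + a/l) + Real.exp (-(2*a)) * stdCdf (l - a/l))
      (stdPdf (l + a/l) * (1 + -(a/l^2))
        + Real.exp (-(2*a)) * (stdPdf (l - a/l) * (1 - -(a/l^2)))) l :=
    c1.add (c2.const_mul _)
  have cH := (cg.mul (hasDerivAt_E hσ)).neg
  refine cH.congr_deriv ?_
  have hkey : Real.exp (-(2*a)) * stdPdf (l - a/l) = stdPdf (l + a/l) := pdf_shift hl.ne'
  have hexpand : stdPdf (l + a/l) * (1 + -(a/l^2))
      + Real.exp (-(2*a)) * (stdPdf (l - a/l) * (1 - -(a/l^2)))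
      = 2 * stdPdf (l + a/l) := by
    rw [mul_comm (stdPdf (l - a/l)) (1 - -(a/l^2)), ← mul_assoc, mul_comm (Real.exp (-(2*a))),
      mul_assoc, hkey]
    ring
  rw [← hexpand]
  ring

lemma tendsto_g_zero {a : ℝ} (ha : 0 ≤ a) :
    Tendsto (fun l : ℝ => stdCdf (l + a/l) + Real.exp (-(2*a)) * stdCdf (l - a/l))
      (𝓝[>] (0:ℝ)) (𝓝 1) := by
  rcases ha.eq_or_lt with rfl | ha'
  · simp only [zero_div, add_zero, sub_zero, mul_zero, neg_zero, Real.exp_zero, one_mul]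
    have h : Tendsto (fun l : ℝ => stdCdf l + stdCdf l) (𝓝[>] (0:ℝ))
        (𝓝 (stdCdf 0 + stdCdf 0)) :=
      ((stdCdf_cont.tendsto 0).add (stdCdf_cont.tendsto 0)).mono_left nhdsWithin_le_nhds
    rw [stdCdf_zero] at h; norm_num at h; exact h
  · have hid : Tendsto (fun l : ℝ => l) (𝓝[>] (0:ℝ)) (𝓝 0) :=
      tendsto_id.mono_left nhdsWithin_le_nhds
    have hinv : Tendsto (fun l : ℝ => a / l) (𝓝[>] (0:ℝ)) atTop := by
      simp only [div_eq_mul_inv]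
      exact tendsto_inv_nhdsGT_zero.const_mul_atTop ha'
    have h1 : Tendsto (fun l : ℝ => l + a/l) (𝓝[>] (0:ℝ)) atTop := hid.add_atTop hinv
    have h2 : Tendsto (fun l : ℝ => l - a/l) (𝓝[>] (0:ℝ)) atBot := by
      simp only [sub_eq_add_neg]
      exact hid.add_atBot (tendsto_neg_atBot_iff.2 hinv)
    have c1 : Tendsto (fun l : ℝ => stdCdf (l + a/l)) (𝓝[>] (0:ℝ)) (𝓝 1) :=
      stdCdf_tendsto_atTop.comp h1
    have c2 : Tendsto (fun l : ℝ => stdCdf (l - a/l)) (𝓝[>] (0:ℝ)) (𝓝 0) :=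
      stdCdf_tendsto_atBot.comp h2
    have := c1.add (c2.const_mul (Real.exp (-(2*a))))
    norm_num at this
    exact this

lemma tendsto_g_atTop {a : ℝ} :
    Tendsto (fun l : ℝ => stdCdf (l + a/l) + Real.exp (-(2*a)) * stdCdf (l - a/l))
      atTop (𝓝 (1 + Real.exp (-(2*a)))) := by
  have hinv : Tendsto (fun l : ℝ => a / l) atTop (𝓝 0) := by
    simp only [div_eq_mul_inv]
    simpa using tendsto_inv_atTop_zero.const_mul a
  have h1 : Tendsto (fun l : ℝ => l + a/l) atTop atTop := tendsto_id.atTop_add hinv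
  have h2 : Tendsto (fun l : ℝ => l - a/l) atTop atTop := by
    simp only [sub_eq_add_neg]
    exact tendsto_id.atTop_add hinv.neg
  have c1 : Tendsto (fun l : ℝ => stdCdf (l + a/l)) atTop (𝓝 1) :=
    stdCdf_tendsto_atTop.comp h1
  have c2 : Tendsto (fun l : ℝ => stdCdf (l - a/l)) atTop (𝓝 1) :=
    stdCdf_tendsto_atTop.comp h2
  have := c1.add (c2.const_mul (Real.exp (-(2*a))))
  norm_num at this
  exact this

lemma tendsto_E_atTop {σ : ℝ} (hσ : 0 < σ) :
    Tendsto (fun l : ℝ => Real.exp (-l^2/(2*σ^2))) atTop (𝓝 0) := by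
  apply Real.tendsto_exp_atBot.comp
  have h1 : Tendsto (fun l : ℝ => l^2) atTop atTop := tendsto_pow_atTop two_ne_zero
  have h2 : Tendsto (fun l : ℝ => l^2 / (2*σ^2)) atTop atTop :=
    h1.atTop_div_const (by positivity)
  simpa [neg_div] using tendsto_neg_atBot_iff.2 h2

lemma tendsto_E_zero {σ : ℝ} (hσ : 0 < σ) :
    Tendsto (fun l : ℝ => Real.exp (-l^2/(2*σ^2))) (𝓝[>] (0:ℝ)) (𝓝 1) := by
  have hcont : Continuous (fun l : ℝ => Real.exp (-l^2/(2*σ^2))) := by fun_prop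
  have := (hcont.tendsto 0).mono_left (nhdsWithin_le_nhds (s := Ioi (0:ℝ)))
  norm_num at this
  exact this

lemma ray_integrable {σ : ℝ} (hσ : 0 < σ) :
    Integrable (fun l : ℝ => l/σ^2 * Real.exp (-l^2/(2*σ^2))) := by
  have hb : (0:ℝ) < (2*σ^2)⁻¹ := by positivity
  have := (integrable_mul_exp_neg_mul_sq hb).const_mul (σ^2)⁻¹
  apply this.congr
  filter_upwards with l
  rw [div_eq_mul_inv, mul_comm l (σ^2)⁻¹, mul_assoc]
  congr 2
  ring

lemma I_E {σ : ℝ} (hσ : 0 < σ) : Integrable (fun l : ℝ => Real.exp (-l^2/(2*σ^2))) := by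
  have hb : (0:ℝ) < (2*σ^2)⁻¹ := by positivity
  apply (integrable_exp_neg_mul_sq hb).congr
  filter_upwards with l
  congr 1; ring

lemma main1 {σ a : ℝ} (hσ : 0 < σ) (ha : 0 ≤ a) :
    ∫ l in Ioi (0:ℝ),
      (stdCdf (l + a/l) + Real.exp (-(2*a)) * stdCdf (l - a/l))
        * (l/σ^2 * Real.exp (-l^2/(2*σ^2)))
      = 1 + (Real.sqrt (1 + 1/σ^2))⁻¹ * Real.exp (-a - a * Real.sqrt (1 + 1/σ^2)) := by
  have hσ2 : (σ:ℝ)^2 ≠ 0 := by positivity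
  set g : ℝ → ℝ := fun l => stdCdf (l + a/l) + Real.exp (-(2*a)) * stdCdf (l - a/l) with hg_def
  set w : ℝ → ℝ := fun l => l/σ^2 * Real.exp (-l^2/(2*σ^2)) with hw_def
  set q : ℝ → ℝ := fun l => 2 * stdPdf (l + a/l) * Real.exp (-l^2/(2*σ^2)) with hq_def
  set H : ℝ → ℝ := fun l => if l ≤ 0 then (-1:ℝ)
    else -(g l * Real.exp (-l^2/(2*σ^2))) with hH_def
  -- measurability
  have hmeas_u1 : Measurable fun l : ℝ => l + a/l :=
    measurable_id.add (measurable_const.div measurable_id)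
  have hmeas_u2 : Measurable fun l : ℝ => l - a/l :=
    measurable_id.sub (measurable_const.div measurable_id)
  have hmeas_g : Measurable g :=
    (stdCdf_cont.measurable.comp hmeas_u1).add
      ((stdCdf_cont.measurable.comp hmeas_u2).const_mul _)
  have hmeas_E : Measurable fun l : ℝ => Real.exp (-l^2/(2*σ^2)) := by fun_prop
  have hmeas_w : Measurable w := by
    apply Measurable.mul _ hmeas_E
    exact measurable_id.div_const _
  have hgbound : ∀ l : ℝ, |g l| ≤ 1 + Real.exp (-(2*a)) := by
    intro l
    simp only [hg_def]
    rw [abs_le]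
    constructor
    · nlinarith [stdCdf_nonneg (l + a/l), stdCdf_nonneg (l - a/l),
        (Real.exp_pos (-(2*a))).le, Real.exp_pos (-(2*a))]
    · nlinarith [stdCdf_le_one (l + a/l), stdCdf_le_one (l - a/l),
        stdCdf_nonneg (l - a/l), (Real.exp_pos (-(2*a))).le]
  -- integrability
  have I_gw : IntegrableOn (fun l => g l * w l) (Ioi (0:ℝ)) := by
    apply Integrable.mono' (g := fun l => (1 + Real.exp (-(2*a))) * w l)
    · exact (((ray_integrable hσ).const_mul _)).restrict
    · exact (hmeas_g.mul hmeas_w).aestronglyMeasurable.restrict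
    · rw [ae_restrict_iff' measurableSet_Ioi]
      filter_upwards with l hl
      have hl' : (0:ℝ) < l := hl
      have hw_nonneg : 0 ≤ w l := by
        simp only [hw_def]
        positivity
      rw [Real.norm_eq_abs, abs_mul, abs_of_nonneg hw_nonneg]
      exact mul_le_mul_of_nonneg_right (hgbound l) hw_nonneg
  have I_q : IntegrableOn q (Ioi (0:ℝ)) := by
    apply Integrable.mono' (g := fun l => 2 * (Real.sqrt (2*Real.pi))⁻¹
      * Real.exp (-l^2/(2*σ^2)))
    · exact (((I_E hσ).const_mul _)).restrict
    · exact (((stdPdf_cont.measurable.comp hmeas_u1).const_mul 2).mul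
        hmeas_E).aestronglyMeasurable.restrict
    · apply ae_of_all
      intro l
      simp only [hq_def]
      have h1 : 0 ≤ stdPdf (l + a/l) := stdPdf_nonneg _
      have h2 : stdPdf (l + a/l) ≤ (Real.sqrt (2*Real.pi))⁻¹ := stdPdf_le _
      have h3 : 0 < Real.exp (-l^2/(2*σ^2)) := Real.exp_pos _
      rw [Real.norm_eq_abs, abs_of_nonneg (by positivity)]
      nlinarith [mul_le_mul_of_nonneg_right h2 h3.le]
  -- derivative
  have hderiv : ∀ l ∈ Ioi (0:ℝ), HasDerivAt H (g l * w l - q l) l := by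
    intro l hl
    have hl' : (0:ℝ) < l := hl
    have hev : H =ᶠ[𝓝 l] fun l => -(g l * Real.exp (-l^2/(2*σ^2))) := by
      filter_upwards [Ioi_mem_nhds hl'] with t ht
      simp only [hH_def, if_neg (not_le.2 (mem_Ioi.1 ht))]
    have hd0 : HasDerivAt (fun l : ℝ => -(g l * Real.exp (-l^2/(2*σ^2))))
        (g l * w l - q l) l := hasDerivAt_H (σ := σ) (a := a) hσ hl'
    exact hd0.congr_of_eventuallyEq hev
  -- continuity at 0
  have hH0 : H 0 = -1 := by simp [hH_def]
  have hcont : ContinuousWithinAt H (Ici (0:ℝ)) 0 := by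
    rw [← continuousWithinAt_Ioi_iff_Ici]
    unfold ContinuousWithinAt
    rw [hH0]
    have ht : Tendsto (fun l : ℝ => -(g l * Real.exp (-l^2/(2*σ^2)))) (𝓝[>] (0:ℝ))
        (𝓝 (-(1*1))) := ((tendsto_g_zero ha).mul (tendsto_E_zero hσ)).neg
    simp only [mul_one] at ht
    apply ht.congr'
    filter_upwards [self_mem_nhdsWithin] with t ht'
    simp only [hH_def, if_neg (not_le.2 (mem_Ioi.1 ht'))]
  -- limit at infinity
  have htop : Tendsto H atTop (𝓝 0) := by
    have h := ((tendsto_g_atTop (a := a)).mul (tendsto_E_atTop hσ)).neg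
    rw [mul_zero, neg_zero] at h
    apply h.congr'
    filter_upwards [Ioi_mem_atTop (0:ℝ)] with t ht
    simp only [hH_def, if_neg (not_le.2 (mem_Ioi.1 ht)), hg_def]
  -- FTC
  have hFTC := integral_Ioi_of_hasDerivAt_of_tendsto hcont hderiv (I_gw.sub I_q) htop
  rw [hH0] at hFTC
  norm_num at hFTC
  -- value of ∫ q
  set η := Real.sqrt (1 + 1/σ^2) with hη_def
  have hη : 0 < η := Real.sqrt_pos.2 (by positivity)
  have hη2 : η^2 = 1 + 1/σ^2 := Real.sq_sqrt (by positivity)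
  have hq_val : ∫ l in Ioi (0:ℝ), q l = η⁻¹ * Real.exp (-a - a * η) := by
    have hpt : ∀ l ∈ Ioi (0:ℝ), q l
        = (2 * (Real.sqrt (2*Real.pi))⁻¹ * Real.exp (-a))
          * Real.exp (-(η^2*l^2 + a^2/l^2)/2) := by
      intro l hl
      have hl' : (0:ℝ) < l := hl
      have hexp : -((l + a/l)^2)/2 + -l^2/(2*σ^2) = -a + -(η^2*l^2 + a^2/l^2)/2 := by
        rw [hη2]
        field_simp
        ring
      simp only [hq_def, stdPdf]
      rw [mul_assoc, mul_assoc, ← Real.exp_add, hexp, Real.exp_add]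
      ring
    rw [setIntegral_congr_fun measurableSet_Ioi hpt, integral_const_mul, glasser hη ha]
    have hs : Real.sqrt (2*Real.pi) ≠ 0 := by positivity
    rw [show -a - a*η = -a + -(η*a) by ring, Real.exp_add]
    field_simp
  -- combine
  have hsub := integral_sub I_gw I_q
  rw [hFTC] at hsub
  rw [hq_val] at hsub
  linarith [hsub]

lemma stmt8_core (σ : ℝ) (hσ : 0 < σ) (x y : ℝ) (hxy : x ≤ y) :
    ∫ l in Set.Ioi (0 : ℝ),
        (stdCdf (l + (y - x) / (2 * l)) * Real.exp (-x)
          + stdCdf (l + (x - y) / (2 * l)) * Real.exp (-y))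
          * (l / σ ^ 2 * Real.exp (-(l ^ 2) / (2 * σ ^ 2)))
      = Real.exp (-(min x y))
        + (Real.sqrt (1 + 1 / σ ^ 2))⁻¹ * Real.exp (-((x + y) / 2))
          * Real.exp (-(|y - x| * Real.sqrt (1 + 1 / σ ^ 2) / 2)) := by
  set a := (y - x)/2 with ha_def
  have ha : 0 ≤ a := by rw [ha_def]; linarith
  have hmin : min x y = x := min_eq_left hxy
  have habs : |y - x| = 2*a := by rw [abs_of_nonneg (by linarith), ha_def]; ring
  have hpt : ∀ l ∈ Ioi (0:ℝ),
      (stdCdf (l + (y - x) / (2 * l)) * Real.exp (-x)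
        + stdCdf (l + (x - y) / (2 * l)) * Real.exp (-y))
        * (l / σ ^ 2 * Real.exp (-(l ^ 2) / (2 * σ ^ 2)))
      = Real.exp (-x) * ((stdCdf (l + a/l) + Real.exp (-(2*a)) * stdCdf (l - a/l))
          * (l/σ^2 * Real.exp (-l^2/(2*σ^2)))) := by
    intro l hl
    have hl' : (0:ℝ) < l := hl
    have e1 : (y - x)/(2*l) = a/l := by rw [ha_def]; field_simp
    have e2 : l + (x - y)/(2*l) = l - a/l := by rw [ha_def]; field_simp; ring
    have e3 : Real.exp (-y) = Real.exp (-x) * Real.exp (-(2*a)) := by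
      rw [← Real.exp_add]; congr 1; rw [ha_def]; ring
    rw [e1, e2, e3]; ring
  rw [setIntegral_congr_fun measurableSet_Ioi hpt, integral_const_mul, main1 hσ ha,
    hmin, habs, mul_add, mul_one]
  congr 1
  set η := Real.sqrt (1 + 1/σ^2) with hη_def
  calc Real.exp (-x) * (η⁻¹ * Real.exp (-a - a*η))
      = η⁻¹ * (Real.exp (-x) * Real.exp (-a)) * Real.exp (-(2*a*η/2)) := by
        rw [show (-a - a*η : ℝ) = (-a) + (-(2*a*η/2)) by ring, Real.exp_add]; ring
    _ = η⁻¹ * Real.exp (-((x+y)/2)) * Real.exp (-(2*a*η/2)) := by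
        rw [← Real.exp_add]
        congr 2
        rw [ha_def]; ring


/-- **Rayleigh mixture of Hüsler–Reiss distributions.** -/
theorem stmt8 (σ : ℝ) (hσ : 0 < σ) (x y : ℝ) :
    ∫ l in Set.Ioi (0 : ℝ),
        (stdCdf (l + (y - x) / (2 * l)) * Real.exp (-x)
          + stdCdf (l + (x - y) / (2 * l)) * Real.exp (-y))
          * (l / σ ^ 2 * Real.exp (-(l ^ 2) / (2 * σ ^ 2)))
      = Real.exp (-(min x y))
        + (Real.sqrt (1 + 1 / σ ^ 2))⁻¹ * Real.exp (-((x + y) / 2))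
          * Real.exp (-(|y - x| * Real.sqrt (1 + 1 / σ ^ 2) / 2)) := by
  rcases le_total x y with h | h
  · exact stmt8_core σ hσ x y h
  · have hcore := stmt8_core σ hσ y x h
    have hfun : (fun l : ℝ => (stdCdf (l + (y - x) / (2 * l)) * Real.exp (-x)
          + stdCdf (l + (x - y) / (2 * l)) * Real.exp (-y))
          * (l / σ ^ 2 * Real.exp (-(l ^ 2) / (2 * σ ^ 2))))
        = (fun l : ℝ => (stdCdf (l + (x - y) / (2 * l)) * Real.exp (-y)
          + stdCdf (l + (y - x) / (2 * l)) * Real.exp (-x))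
          * (l / σ ^ 2 * Real.exp (-(l ^ 2) / (2 * σ ^ 2)))) := by
      funext l; ring
    rw [show (∫ l in Set.Ioi (0 : ℝ),
        (stdCdf (l + (y - x) / (2 * l)) * Real.exp (-x)
          + stdCdf (l + (x - y) / (2 * l)) * Real.exp (-y))
          * (l / σ ^ 2 * Real.exp (-(l ^ 2) / (2 * σ ^ 2))))
      = ∫ l in Set.Ioi (0 : ℝ),
        (stdCdf (l + (x - y) / (2 * l)) * Real.exp (-y)
          + stdCdf (l + (y - x) / (2 * l)) * Real.exp (-x))
          * (l / σ ^ 2 * Real.exp (-(l ^ 2) / (2 * σ ^ 2))) from by rw [hfun]]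
    rw [hcore, min_comm y x, abs_sub_comm x y, add_comm y x]
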